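/- Discrete weighted estimate (Lemma 4.7, k = 0 case): let Ω be partitioned into measurable pieces {Δ}, let ℓ ≥ 0 be affine on each tetrahedron Δ and let ℓ_h be the piecewise constant function equal to max_Δ ℓ on each Δ. Then for every piecewise constant vector function u, ‖ℓ_h u‖_{L²} ≤ 2 ‖√(ℓ ℓ_h) u‖_{L²}, i.e. ∫_Ω ℓ_h² |u|² ≤ 4 ∫_Ω ℓ ℓ_h |u|². -/

import Mathlib

open MeasureTheory
open scoped RealInnerProductSpace BigOperators

lemma key_simplex (s : Set (EuclideanSpace ℝ (Fin 3))) (hconv : Convex ℝ s) (hcomp : IsCompact s)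
    (a : EuclideanSpace ℝ (Fin 3)) (b : ℝ) (m : ℝ)
    (hpos : ∀ x ∈ s, 0 ≤ ⟪a, x⟫ + b)
    (hm : IsGreatest ((fun x => ⟪a, x⟫ + b) '' s) m) :
    m * (volume s).toReal ≤ 4 * ∫ x in s, (⟪a, x⟫ + b) := by
  set g : EuclideanSpace ℝ (Fin 3) → ℝ := fun x => ⟪a, x⟫ + b with hg
  obtain ⟨x₀, hx₀, hgx₀⟩ := hm.1
  have hmeas : MeasurableSet s := hcomp.measurableSet
  have hgc : Continuous g := by
    apply Continuous.add _ continuous_const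
    exact continuous_const.inner continuous_id
  have hI : IntegrableOn g s := hgc.continuousOn.integrableOn_compact hcomp
  set V : ℝ := (volume s).toReal with hV
  set I : ℝ := ∫ x in s, g x with hIdef
  have main : ∀ t : ℝ, t ∈ Set.Ioo (0:ℝ) 1 → t^3 * m * V ≤ (1 + t + t^2 + t^3) * I := by
    intro t ht
    set F : EuclideanSpace ℝ (Fin 3) → EuclideanSpace ℝ (Fin 3) :=
      fun y => x₀ + t • (y - x₀) with hF
    have hFs : F '' s ⊆ s := by
      rintro _ ⟨y, hy, rfl⟩
      have heq : x₀ + t • (y - x₀) = (1 - t) • x₀ + t • y := by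
        simp [smul_sub, sub_smul]; abel
      show x₀ + t • (y - x₀) ∈ s
      rw [heq]
      exact hconv hx₀ hy (by linarith [ht.2]) (le_of_lt ht.1) (by ring)
    have hFderiv : ∀ y ∈ s,
        HasFDerivWithinAt F (t • (ContinuousLinearMap.id ℝ (EuclideanSpace ℝ (Fin 3)))) s y := by
      intro y hy
      have h1 : HasFDerivAt (fun y : EuclideanSpace ℝ (Fin 3) => y - x₀)
          (ContinuousLinearMap.id ℝ _) y := (hasFDerivAt_id y).sub_const x₀
      exact (((h1.const_smul t).const_add x₀)).hasFDerivWithinAt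
    have hFinj : Set.InjOn F s := by
      intro y1 _ y2 _ h
      have h2 : t • (y1 - x₀) = t • (y2 - x₀) := by
        have := h; simpa [hF] using this
      have := smul_right_injective (EuclideanSpace ℝ (Fin 3)) (ne_of_gt ht.1) h2
      simpa using this
    have hdet : ((t • (ContinuousLinearMap.id ℝ (EuclideanSpace ℝ (Fin 3)))).det : ℝ) = t ^ 3 := by
      rw [ContinuousLinearMap.det]
      simp only [ContinuousLinearMap.coe_smul, ContinuousLinearMap.coe_id]
      rw [LinearMap.det_smul]
      simp [finrank_euclideanSpace]
    have hcov : ∫ x in F '' s, g x = ∫ y in s, t^3 * g (F y) := by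
      rw [integral_image_eq_integral_abs_det_fderiv_smul volume hmeas hFderiv hFinj g]
      congr 1
      funext y
      rw [hdet, abs_of_nonneg (pow_nonneg ht.1.le 3), smul_eq_mul]
    have hgF : ∀ y, g (F y) = (1 - t) * m + t * g y := by
      intro y
      simp only [hF, hg]
      rw [← hgx₀]
      simp only [inner_add_right, real_inner_smul_right, inner_sub_right]
      ring
    have hcomp2 : ∫ y in s, t^3 * g (F y) = t^3 * (1-t) * m * V + t^4 * I := by
      have heq : (fun y => t^3 * g (F y)) = fun y => t^3 * ((1-t)*m) + (t^4) * g y := by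
        funext y; rw [hgF y]; ring
      rw [heq, integral_add (integrableOn_const (μ := volume) (C := t ^ 3 * ((1 - t) * m)) hcomp.measure_lt_top.ne enorm_ne_top).integrable (hI.const_mul _)]
      rw [setIntegral_const, integral_const_mul, measureReal_def]
      simp only [smul_eq_mul, ← hV, ← hIdef]
      ring
    have hmono : ∫ x in F '' s, g x ≤ I := by
      apply setIntegral_mono_set hI
      · filter_upwards [ae_restrict_mem hmeas] with x hx using hpos x hx
      · exact HasSubset.Subset.eventuallyLE hFs
    have hA : t^3 * (1-t) * m * V + t^4 * I ≤ I := by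
      rw [← hcomp2, ← hcov]; exact hmono
    nlinarith [ht.1, ht.2, sq_nonneg t]
  -- take the limit t → 1⁻
  have hcont : Filter.Tendsto (fun t : ℝ => t^3 * m * V - (1 + t + t^2 + t^3) * I)
      (nhdsWithin 1 (Set.Iio 1)) (nhds (1 * m * V - 4 * I)) := by
    have : Continuous (fun t : ℝ => t^3 * m * V - (1 + t + t^2 + t^3) * I) := by fun_prop
    have h := (this.tendsto 1).mono_left (nhdsWithin_le_nhds (s := Set.Iio 1))
    convert h using 2
    norm_num
  have hev : ∀ᶠ t in nhdsWithin (1:ℝ) (Set.Iio 1),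
      t^3 * m * V - (1 + t + t^2 + t^3) * I ≤ 0 := by
    have h0 : ∀ᶠ t in nhdsWithin (1:ℝ) (Set.Iio 1), (0:ℝ) < t := by
      apply Filter.Eventually.filter_mono nhdsWithin_le_nhds
      exact eventually_gt_nhds one_pos
    have h1 : ∀ᶠ t in nhdsWithin (1:ℝ) (Set.Iio 1), t < 1 :=
      eventually_mem_nhdsWithin.mono (fun t ht => ht)
    filter_upwards [h0, h1] with t ht0 ht1
    have := main t ⟨ht0, ht1⟩
    linarith
  have hlim : 1 * m * V - 4 * I ≤ 0 := le_of_tendsto hcont hev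
  linarith

/-- Discrete weighted estimate (Lemma 4.7, `k = 0` case): let `Ω` be partitioned into finitely
many tetrahedra `Δ i`, let `ℓ ≥ 0` be affine on each tetrahedron, let `ℓh` be the piecewise
constant function equal to the maximum `m i` of `ℓ` on each piece, and let `u` be piecewise
constant. Then `∫_Ω ℓ_h² |u|² ≤ 4 ∫_Ω ℓ ℓ_h |u|²`. -/
theorem discrete_weighted_estimate {ι : Type*} [Fintype ι]
    (Δ : ι → Set (EuclideanSpace ℝ (Fin 3)))
    (hmeas : ∀ i, MeasurableSet (Δ i))
    (hdisj : Pairwise (Function.onFun Disjoint Δ))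
    (htet : ∀ i, ∃ v : Fin 4 → EuclideanSpace ℝ (Fin 3),
      AffineIndependent ℝ v ∧ Δ i = convexHull ℝ (Set.range v))
    (ℓ : EuclideanSpace ℝ (Fin 3) → ℝ)
    (hℓaff : ∀ i, ∃ (a : EuclideanSpace ℝ (Fin 3)) (b : ℝ), ∀ x ∈ Δ i, ℓ x = ⟪a, x⟫ + b)
    (hℓnonneg : ∀ i, ∀ x ∈ Δ i, 0 ≤ ℓ x)
    (m : ι → ℝ) (hm : ∀ i, IsGreatest (ℓ '' Δ i) (m i))
    (ℓh : EuclideanSpace ℝ (Fin 3) → ℝ) (hℓh : ∀ i, ∀ x ∈ Δ i, ℓh x = m i)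
    (u : EuclideanSpace ℝ (Fin 3) → EuclideanSpace ℝ (Fin 3))
    (c : ι → EuclideanSpace ℝ (Fin 3)) (hu : ∀ i, ∀ x ∈ Δ i, u x = c i) :
    ∫ x in ⋃ i, Δ i, (ℓh x) ^ 2 * ‖u x‖ ^ 2
      ≤ 4 * ∫ x in ⋃ i, Δ i, ℓ x * ℓh x * ‖u x‖ ^ 2 := by
  classical
  choose a b hab using hℓaff
  set g : ι → EuclideanSpace ℝ (Fin 3) → ℝ := fun i x => ⟪a i, x⟫ + b i with hgdef
  have hconv : ∀ i, Convex ℝ (Δ i) := by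
    intro i; obtain ⟨v, _, hv⟩ := htet i; rw [hv]; exact convex_convexHull ℝ _
  have hcomp : ∀ i, IsCompact (Δ i) := by
    intro i; obtain ⟨v, _, hv⟩ := htet i; rw [hv]
    exact (Set.finite_range v).isCompact_convexHull ℝ
  have himg : ∀ i, ℓ '' Δ i = g i '' Δ i := fun i =>
    Set.image_congr (fun x hx => hab i x hx)
  have hgc : ∀ i, Continuous (g i) := fun i =>
    (continuous_const.inner continuous_id).add continuous_const
  have hm0 : ∀ i, 0 ≤ m i := by
    intro i
    obtain ⟨x₀, hx₀, hx₀'⟩ := (hm i).1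
    rw [← hx₀']; exact hℓnonneg i x₀ hx₀
  set f1 : EuclideanSpace ℝ (Fin 3) → ℝ := fun x => (ℓh x) ^ 2 * ‖u x‖ ^ 2 with hf1
  set f2 : EuclideanSpace ℝ (Fin 3) → ℝ := fun x => ℓ x * ℓh x * ‖u x‖ ^ 2 with hf2
  have hf1eq : ∀ i, Set.EqOn f1 (fun _ => (m i) ^ 2 * ‖c i‖ ^ 2) (Δ i) := by
    intro i x hx; simp only [hf1]; rw [hℓh i x hx, hu i x hx]
  have hf2eq : ∀ i, Set.EqOn f2 (fun x => g i x * (m i * ‖c i‖ ^ 2)) (Δ i) := by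
    intro i x hx; simp only [hf2, hgdef]; rw [hℓh i x hx, hu i x hx, hab i x hx]; ring
  have hint1 : ∀ i, IntegrableOn f1 (Δ i) := by
    intro i
    exact (integrableOn_const (hcomp i).measure_lt_top.ne).congr_fun
      (fun x hx => (hf1eq i hx).symm) (hmeas i)
  have hint2 : ∀ i, IntegrableOn f2 (Δ i) := by
    intro i
    have : IntegrableOn (fun x => g i x * (m i * ‖c i‖ ^ 2)) (Δ i) :=
      (((hgc i).mul continuous_const).continuousOn).integrableOn_compact (hcomp i)
    exact this.congr_fun (fun x hx => (hf2eq i hx).symm) (hmeas i)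
  have hdisj' : Pairwise (Function.onFun (MeasureTheory.AEDisjoint volume) Δ) :=
    fun i j h => (hdisj h).aedisjoint
  have hsplit1 : ∫ x in ⋃ i, Δ i, f1 x = ∑ i, ∫ x in Δ i, f1 x := by
    rw [integral_iUnion hmeas hdisj (integrableOn_finite_iUnion.mpr hint1), tsum_fintype]
  have hsplit2 : ∫ x in ⋃ i, Δ i, f2 x = ∑ i, ∫ x in Δ i, f2 x := by
    rw [integral_iUnion hmeas hdisj (integrableOn_finite_iUnion.mpr hint2), tsum_fintype]
  show ∫ x in ⋃ i, Δ i, f1 x ≤ 4 * ∫ x in ⋃ i, Δ i, f2 x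
  rw [hsplit1, hsplit2, Finset.mul_sum]
  apply Finset.sum_le_sum
  intro i _
  have hkey : m i * (volume (Δ i)).toReal ≤ 4 * ∫ x in Δ i, (⟪a i, x⟫ + b i) := by
    apply key_simplex (Δ i) (hconv i) (hcomp i) (a i) (b i) (m i)
    · intro x hx; rw [← hab i x hx]; exact hℓnonneg i x hx
    · rw [← himg i]; exact hm i
  have h1 : ∫ x in Δ i, f1 x = (m i) ^ 2 * ‖c i‖ ^ 2 * (volume (Δ i)).toReal := by
    rw [setIntegral_congr_fun (hmeas i) (hf1eq i), setIntegral_const, smul_eq_mul, measureReal_def]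
    ring
  have h2 : ∫ x in Δ i, f2 x = (∫ x in Δ i, (⟪a i, x⟫ + b i)) * (m i * ‖c i‖ ^ 2) := by
    rw [setIntegral_congr_fun (hmeas i) (hf2eq i), integral_mul_const]
  rw [h1, h2]
  nlinarith [mul_le_mul_of_nonneg_left hkey
    (mul_nonneg (hm0 i) (sq_nonneg ‖c i‖) : (0:ℝ) ≤ m i * ‖c i‖ ^ 2)]
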